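/- (Correlation polytope criterion) Let B be freely generated by A_1,…,A_n, X a set of meets of distinct generators containing all the generators, and f : X → [0,1]. Then f extends to a normalized measure on B if and only if the vector p = (f(A_{i_1} ∩ … ∩ A_{i_k}))_{elements of X} is a convex combination of the 2^n vectors u_ε with components ε_{i_1}·…·ε_{i_k}, for ε ∈ {0,1}^n. -/

import Mathlib

def IsNormMeasure {B : Type*} [BooleanAlgebra B] (m : B → ℝ) : Prop :=
  (∀ x, 0 ≤ m x) ∧ (∀ x y : B, x ⊓ y = ⊥ → m (x ⊔ y) = m x + m y) ∧ m ⊤ = 1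

def IsFreelyGeneratedBy {n : ℕ} {B : Type*} [BooleanAlgebra B] (A : Fin n → B) : Prop :=
  ∀ (C : Type) [BooleanAlgebra C], ∀ g : Fin n → C,
    ∃! φ : BoundedLatticeHom B C, ∀ i, φ (A i) = g i


open Finset

section Aux

variable {B : Type*} [BooleanAlgebra B] {n : ℕ}

/-- The atom corresponding to a sign pattern `ε`. -/
def bAtom (A : Fin n → B) (ε : Fin n → Bool) : B :=
  Finset.univ.inf fun i => if ε i then A i else (A i)ᶜ

lemma bAtom_le_of_true {A : Fin n → B} {ε : Fin n → Bool} {i : Fin n} (h : ε i = true) :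
    bAtom A ε ≤ A i := by
  have := Finset.inf_le (f := fun i => if ε i then A i else (A i)ᶜ) (mem_univ i)
  simpa [h, bAtom] using this

lemma bAtom_le_of_false {A : Fin n → B} {ε : Fin n → Bool} {i : Fin n} (h : ε i = false) :
    bAtom A ε ≤ (A i)ᶜ := by
  have := Finset.inf_le (f := fun i => if ε i then A i else (A i)ᶜ) (mem_univ i)
  simpa [h, bAtom] using this

lemma bAtom_disjoint {A : Fin n → B} {ε ε' : Fin n → Bool} (h : ε ≠ ε') :
    bAtom A ε ⊓ bAtom A ε' = ⊥ := by
  obtain ⟨i, hi⟩ := Function.ne_iff.mp h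
  rcases Bool.eq_false_or_eq_true (ε i) with h1 | h1
  · have h2 : ε' i = false := by cases hb : ε' i <;> simp_all
    refine le_antisymm ?_ bot_le
    calc bAtom A ε ⊓ bAtom A ε' ≤ A i ⊓ (A i)ᶜ :=
          inf_le_inf (bAtom_le_of_true h1) (bAtom_le_of_false h2)
      _ = ⊥ := by simp
  · have h2 : ε' i = true := by cases hb : ε' i <;> simp_all
    refine le_antisymm ?_ bot_le
    calc bAtom A ε ⊓ bAtom A ε' ≤ (A i)ᶜ ⊓ A i :=
          inf_le_inf (bAtom_le_of_false h1) (bAtom_le_of_true h2)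
      _ = ⊥ := by simp

lemma sup_bAtom (A : Fin n → B) : (Finset.univ.sup fun ε => bAtom A ε) = ⊤ := by
  have key : (Finset.univ.inf fun i : Fin n =>
      ({false, true} : Finset Bool).sup fun b => if b then A i else (A i)ᶜ) = ⊤ := by
    rw [Finset.inf_eq_top_iff]
    intro i _
    simp [Finset.sup_insert]
  rw [Finset.inf_sup] at key
  refine le_antisymm le_top ?_
  rw [← key]
  refine Finset.sup_le fun g hg => ?_
  have h1 : (univ.attach.inf fun i : {x // x ∈ (univ : Finset (Fin n))} =>
      if g i.1 i.2 then A i.1 else (A i.1)ᶜ) = bAtom A (fun i => g i (mem_univ i)) := by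
    rw [bAtom]
    exact Finset.inf_attach univ (fun j => if g j (mem_univ j) then A j else (A j)ᶜ)
  exact le_of_eq_of_le h1 (Finset.le_sup (f := fun ε => bAtom A ε) (mem_univ _))

lemma m_bot {m : B → ℝ} (hadd : ∀ x y : B, x ⊓ y = ⊥ → m (x ⊔ y) = m x + m y) : m ⊥ = 0 := by
  have := hadd ⊥ ⊥ (by simp)
  simp at this; linarith

lemma m_sup_sum {m : B → ℝ} (hadd : ∀ x y : B, x ⊓ y = ⊥ → m (x ⊔ y) = m x + m y)
    {ι : Type*} [DecidableEq ι] (g : ι → B) (s : Finset ι)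
    (hd : ∀ x ∈ s, ∀ y ∈ s, x ≠ y → g x ⊓ g y = ⊥) :
    m (s.sup g) = ∑ x ∈ s, m (g x) := by
  induction s using Finset.induction with
  | empty => simpa using m_bot hadd
  | @insert a s ha ih =>
    rw [Finset.sup_insert, Finset.sum_insert ha, hadd, ih]
    · intro x hx y hy hxy
      exact hd x (mem_insert_of_mem hx) y (mem_insert_of_mem hy) hxy
    · rw [Finset.sup_inf_distrib_left]
      refine le_antisymm (Finset.sup_le fun x hx => ?_) bot_le
      rw [hd a (mem_insert_self a s) x (mem_insert_of_mem hx)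
        (fun h => ha (h ▸ hx))]

end Aux

open Finset in
/-- Correlation polytope criterion: `B` free on `A_1, …, A_n`; `X` a set of meets of
distinct generators (encoded by the nonempty index sets `s ∈ S`) containing all the
generators; `f` an assignment of values in `[0,1]` to these meets. Then `f` extends to a
normalized measure on `B` iff the vector `(f s)_{s ∈ S}` is a convex combination of the
`2^n` vectors `u_ε` with components `∏_{i ∈ s} ε_i`. -/
theorem stmt13 {n : ℕ} (B : Type*) [BooleanAlgebra B] (A : Fin n → B)
    (hA : IsFreelyGeneratedBy A)
    (S : Set (Finset (Fin n))) (hS1 : ∀ s ∈ S, s.Nonempty)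
    (hS2 : ∀ i : Fin n, {i} ∈ S)
    (f : Finset (Fin n) → ℝ) (hf : ∀ s ∈ S, f s ∈ Set.Icc (0:ℝ) 1) :
    (∃ μ : B → ℝ, IsNormMeasure μ ∧ ∀ s ∈ S, μ (s.inf A) = f s) ↔
    (∃ lam : (Fin n → Bool) → ℝ,
      (∀ ε, 0 ≤ lam ε) ∧ (∑ ε, lam ε) = 1 ∧
      ∀ s ∈ S, f s = ∑ ε, lam ε * ∏ i ∈ s, (if ε i then (1:ℝ) else 0)) := by
  constructor
  · rintro ⟨μ, ⟨hpos, hadd, htop⟩, hμ⟩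
    refine ⟨fun ε => μ (bAtom A ε), fun ε => hpos _, ?_, ?_⟩
    · rw [← m_sup_sum hadd (bAtom A) univ (fun x _ y _ hxy => bAtom_disjoint hxy),
        sup_bAtom, htop]
    · intro s hs
      rw [← hμ s hs]
      have hxdecomp : s.inf A = univ.sup fun ε => s.inf A ⊓ bAtom A ε := by
        rw [← Finset.sup_inf_distrib_left, sup_bAtom, inf_top_eq]
      have hd : ∀ x ∈ (univ : Finset (Fin n → Bool)), ∀ y ∈ univ, x ≠ y →
          (s.inf A ⊓ bAtom A x) ⊓ (s.inf A ⊓ bAtom A y) = ⊥ := by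
        intro x _ y _ hxy
        refine le_antisymm ?_ bot_le
        calc (s.inf A ⊓ bAtom A x) ⊓ (s.inf A ⊓ bAtom A y)
            ≤ bAtom A x ⊓ bAtom A y := inf_le_inf inf_le_right inf_le_right
          _ = ⊥ := bAtom_disjoint hxy
      rw [hxdecomp, m_sup_sum hadd _ univ hd]
      refine Finset.sum_congr rfl fun ε _ => ?_
      by_cases h : ∀ i ∈ s, ε i = true
      · have h1 : bAtom A ε ≤ s.inf A := Finset.le_inf fun i hi => bAtom_le_of_true (h i hi)
        rw [inf_eq_right.mpr h1, Finset.prod_eq_one (fun i hi => by simp [h i hi]), mul_one]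
      · push_neg at h
        obtain ⟨i, hi, hne⟩ := h
        have hfa : ε i = false := Bool.eq_false_iff.mpr hne
        have hz : s.inf A ⊓ bAtom A ε = ⊥ := by
          refine le_antisymm ?_ bot_le
          calc s.inf A ⊓ bAtom A ε ≤ A i ⊓ (A i)ᶜ :=
                inf_le_inf (Finset.inf_le hi) (bAtom_le_of_false hfa)
            _ = ⊥ := by simp
        rw [hz, m_bot hadd, Finset.prod_eq_zero hi (by simp [hfa]), mul_zero]
  · rintro ⟨lam, hpos, hsum, hrep⟩
    have hφ : ∀ ε : Fin n → Bool, ∃ φ : BoundedLatticeHom B Bool, ∀ i, φ (A i) = ε i :=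
      fun ε => (hA Bool ε).exists
    choose φ hφ using hφ
    classical
    refine ⟨fun x => ∑ ε, lam ε * (if φ ε x then 1 else 0), ⟨?_, ?_, ?_⟩, ?_⟩
    · intro x
      exact Finset.sum_nonneg fun ε _ => mul_nonneg (hpos ε) (by positivity)
    · intro x y hxy
      rw [← Finset.sum_add_distrib]
      refine Finset.sum_congr rfl fun ε _ => ?_
      have h1 : φ ε x ⊓ φ ε y = (⊥ : Bool) := by rw [← map_inf, hxy, map_bot]
      have h2 : φ ε (x ⊔ y) = φ ε x ⊔ φ ε y := map_sup _ _ _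
      rw [h2]
      cases hx : φ ε x <;> cases hy : φ ε y
      · simp only [show (false ⊔ false : Bool) = false from rfl]
        simp
      · simp only [show (false ⊔ true : Bool) = true from rfl]
        simp
      · simp only [show (true ⊔ false : Bool) = true from rfl]
        simp
      · rw [hx, hy] at h1
        exact absurd h1 (by decide)
    · have : ∀ ε, φ ε (⊤ : B) = true := fun ε => map_top (φ ε)
      simp only [this, if_true, mul_one]
      exact hsum
    · intro s hs
      rw [hrep s hs]
      refine Finset.sum_congr rfl fun ε _ => ?_
      congr 1
      have hmap : φ ε (s.inf A) = s.inf fun i => ε i := by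
        rw [map_finset_inf]
        exact Finset.inf_congr rfl fun i _ => hφ ε i
      by_cases h : ∀ i ∈ s, ε i = true
      · have ht : φ ε (s.inf A) = true := by
          rw [hmap, show (true : Bool) = ⊤ from rfl]
          exact (Finset.inf_eq_top_iff _ _).mpr fun i hi => h i hi
        rw [ht, if_pos rfl, Finset.prod_eq_one (fun i hi => by simp [h i hi])]
      · push_neg at h
        obtain ⟨i, hi, hne⟩ := h
        have hfa : ε i = false := Bool.eq_false_iff.mpr hne
        have hfb : φ ε (s.inf A) = false := by
          rw [hmap]
          have : (s.inf fun i => ε i) ≤ ε i := Finset.inf_le hi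
          rw [hfa] at this
          exact le_bot_iff.mp this
        rw [hfb, Finset.prod_eq_zero hi (by simp [hfa])]
        simp
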